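/- There exists an absolute constant C such that for all finite sets A, B ⊆ R and every finite set L of lines y = ax + b in R² with a ≠ 0, the number of incidences satisfies I(A×B, L) ≤ C·max{ |B|^(1/2)·|L|, |B|^(1/2)·|A|^(2/3)·E(L)^(1/6)·|L|^(1/3) }. -/

import Mathlib

set_option maxHeartbeats 1000000

open Finset

/-- Composition in `Aff(ℝ)` of lines `(a,b)`, acting as `x ↦ ax + b`:
`(a,b)∘(c,d) = (ac, ad + b)`. -/
def acomp (l m : ℝ × ℝ) : ℝ × ℝ := (l.1 * m.1, l.1 * m.2 + l.2)

/-- Inverse in `Aff(ℝ)` of a line `(a,b)` with `a ≠ 0`. -/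
noncomputable def ainv (l : ℝ × ℝ) : ℝ × ℝ := (l.1⁻¹, -(l.1⁻¹ * l.2))

/-- The energy of a set of non-vertical lines regarded as elements of `Aff(ℝ)`:
`E(L) = #{(l₁,l₂,l₁',l₂') ∈ L⁴ : l₁⁻¹∘l₂ = l₁'⁻¹∘l₂'}`. -/
noncomputable def affEnergy (L : Finset (ℝ × ℝ)) : ℕ :=
  Set.ncard {q : (ℝ × ℝ) × (ℝ × ℝ) × (ℝ × ℝ) × (ℝ × ℝ) |
    q.1 ∈ L ∧ q.2.1 ∈ L ∧ q.2.2.1 ∈ L ∧ q.2.2.2 ∈ L ∧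
    acomp (ainv q.1) q.2.1 = acomp (ainv q.2.2.1) q.2.2.2}

/-- The number of incidences between the grid `A×B` and the set of lines `L`. -/
noncomputable def inc (A B : Finset ℝ) (L : Finset (ℝ × ℝ)) : ℕ :=
  Set.ncard {ql : (ℝ × ℝ) × ℝ × ℝ |
    ql.1.1 ∈ A ∧ ql.1.2 ∈ B ∧ ql.2 ∈ L ∧ ql.1.2 = ql.2.1 * ql.1.1 + ql.2.2}

noncomputable def idx (A : Finset ℝ) (x : ℝ) : ℕ := (A.filter (fun z => z < x)).card

noncomputable def blk (A : Finset ℝ) (q : ℕ) (x : ℝ) : ℕ := idx A x / q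

noncomputable def richA (A : Finset ℝ) (γ : ℝ × ℝ) : ℕ :=
  (A.filter (fun x => γ.1*x+γ.2 ∈ A)).card

noncomputable def ccnt (A : Finset ℝ) (q : ℕ) (γ : ℝ × ℝ) (c : ℕ × ℕ) : ℕ :=
  ((A.filter (fun x => γ.1*x+γ.2 ∈ A)).filter
    (fun x => blk A q x = c.1 ∧ blk A q (γ.1*x+γ.2) = c.2)).card

noncomputable def nB (A : Finset ℝ) (L : Finset (ℝ × ℝ)) (y : ℝ) : ℕ :=
  (L.filter (fun l => l.1⁻¹ * (y - l.2) ∈ A)).card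

noncomputable def gm (p : (ℝ × ℝ) × (ℝ × ℝ)) : ℝ × ℝ := acomp (ainv p.2) p.1

noncomputable def rfib (L : Finset (ℝ × ℝ)) (γ : ℝ × ℝ) : ℕ :=
  ((L ×ˢ L).filter (fun p => gm p = γ)).card

lemma card_filter_product {α β : Type*} [DecidableEq α] [DecidableEq β]
    (s : Finset α) (t : Finset β) (Q : α → β → Prop) [∀ a b, Decidable (Q a b)] :
    ((s ×ˢ t).filter (fun p => Q p.1 p.2)).card
      = ∑ a ∈ s, (t.filter (Q a)).card := by
  rw [Finset.card_filter, Finset.sum_product]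
  refine Finset.sum_congr rfl (fun a _ => ?_)
  rw [Finset.card_filter]

lemma inc_eq_sum (A B : Finset ℝ) (L : Finset (ℝ × ℝ)) (hL : ∀ l ∈ L, l.1 ≠ 0) :
    inc A B L = ∑ y ∈ B, nB A L y := by
  have hset : {ql : (ℝ × ℝ) × ℝ × ℝ |
      ql.1.1 ∈ A ∧ ql.1.2 ∈ B ∧ ql.2 ∈ L ∧ ql.1.2 = ql.2.1 * ql.1.1 + ql.2.2}
      = ↑(((A ×ˢ B) ×ˢ L).filter
        (fun ql => ql.1.2 = ql.2.1 * ql.1.1 + ql.2.2)) := by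
    ext q; simp [Finset.mem_filter, Finset.mem_product]; tauto
  rw [inc, hset, Set.ncard_coe_finset]
  have h1 : (((A ×ˢ B) ×ˢ L).filter
      (fun ql => ql.1.2 = ql.2.1 * ql.1.1 + ql.2.2)).card
      = ((B ×ˢ L).filter (fun p => p.2.1⁻¹ * (p.1 - p.2.2) ∈ A)).card := by
    apply Finset.card_bij (fun ql _ => (ql.1.2, ql.2))
    · rintro ⟨⟨x, y⟩, l⟩ hq
      simp only [Finset.mem_filter, Finset.mem_product] at hq ⊢
      obtain ⟨⟨⟨hx, hy⟩, hl⟩, he⟩ := hq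
      refine ⟨⟨hy, hl⟩, ?_⟩
      have hx0 : l.1⁻¹ * (y - l.2) = x := by
        have h0 := hL l hl
        have he2 : y = l.1 * x + l.2 := he
        field_simp
        linarith
      rwa [hx0]
    · rintro ⟨⟨x, y⟩, l⟩ hq ⟨⟨x', y'⟩, l'⟩ hq' he
      simp only [Finset.mem_filter, Finset.mem_product] at hq hq'
      simp only [Prod.mk.injEq] at he
      obtain ⟨hy, hl⟩ := he
      subst hy; subst hl
      have e1 : y = l.1 * x + l.2 := hq.2
      have e2 : y = l.1 * x' + l.2 := hq'.2
      have hx : x = x' := by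
        apply mul_left_cancel₀ (hL l hq.1.2); linarith
      simp [hx]
    · rintro ⟨y, l⟩ hp
      simp only [Finset.mem_filter, Finset.mem_product] at hp
      obtain ⟨⟨hy, hl⟩, hx⟩ := hp
      refine ⟨((l.1⁻¹ * (y - l.2), y), l), ?_, rfl⟩
      simp only [Finset.mem_filter, Finset.mem_product]
      refine ⟨⟨⟨hx, hy⟩, hl⟩, ?_⟩
      have := hL l hl; field_simp; ring
  rw [h1, card_filter_product B L (fun y l => l.1⁻¹ * (y - l.2) ∈ A)]
  rfl

lemma idx_lt_card {A : Finset ℝ} {x : ℝ} (hx : x ∈ A) : idx A x < A.card := by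
  apply Finset.card_lt_card
  refine ⟨Finset.filter_subset _ _, fun hsub => ?_⟩
  have := hsub hx
  simp at this

lemma idx_mono {A : Finset ℝ} {x y : ℝ} (h : x ≤ y) : idx A x ≤ idx A y := by
  apply Finset.card_le_card
  intro z hz
  simp only [Finset.mem_filter] at hz ⊢
  exact ⟨hz.1, lt_of_lt_of_le hz.2 h⟩

lemma idx_strict {A : Finset ℝ} {x y : ℝ} (hx : x ∈ A) (h : x < y) :
    idx A x < idx A y := by
  apply Finset.card_lt_card
  refine ⟨?_, fun hsub => ?_⟩
  · intro z hz
    simp only [Finset.mem_filter] at hz ⊢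
    exact ⟨hz.1, lt_trans hz.2 h⟩
  have : x ∈ A.filter (fun z => z < y) := by simp [hx, h]
  have := hsub this
  simp at this

lemma idx_injOn {A : Finset ℝ} : Set.InjOn (idx A) A := by
  intro x hx y hy hxy
  rcases lt_trichotomy x y with h | h | h
  · exact absurd hxy (Nat.ne_of_lt (idx_strict (by simpa using hx) h))
  · exact h
  · exact absurd hxy.symm (Nat.ne_of_lt (idx_strict (by simpa using hy) h))

lemma blk_lt {A : Finset ℝ} {q k : ℕ} (hq : 0 < q) (hk : A.card ≤ q * k)
    {x : ℝ} (hx : x ∈ A) : blk A q x < k := by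
  have h1 : idx A x < q * k := lt_of_lt_of_le (idx_lt_card hx) hk
  exact Nat.div_lt_of_lt_mul h1

lemma blk_mono {A : Finset ℝ} {q : ℕ} {x y : ℝ} (h : x ≤ y) :
    blk A q x ≤ blk A q y := Nat.div_le_div_right (idx_mono h)

lemma blk_size {A : Finset ℝ} {q : ℕ} (hq : 0 < q) (i : ℕ) :
    (A.filter (fun x => blk A q x = i)).card ≤ q := by
  have h : (A.filter (fun x => blk A q x = i)).card
      ≤ (Finset.Ico (i*q) (i*q+q)).card := by
    apply Finset.card_le_card_of_injOn (idx A)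
    · intro x hx
      simp only [Finset.mem_coe, Finset.mem_filter] at hx
      have := hx.2
      simp only [Finset.mem_coe, Finset.mem_Ico]
      have hb : idx A x / q = i := this
      have h4 : i * q ≤ idx A x := by
        calc i * q = (idx A x / q) * q := by rw [hb]
        _ ≤ idx A x := Nat.div_mul_le_self _ _
      have h5 : idx A x < i * q + q := by
        have h2 : q * (idx A x / q) + idx A x % q = idx A x := Nat.div_add_mod _ _
        have h3 : idx A x % q < q := Nat.mod_lt _ hq
        calc idx A x = q * (idx A x / q) + idx A x % q := h2.symm
        _ < q * i + q := by rw [hb]; omega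
        _ = i * q + q := by ring
      exact ⟨h4, h5⟩
    · intro x hx y hy hxy
      exact idx_injOn (Finset.mem_coe.2 (Finset.filter_subset _ _ hx))
        (Finset.mem_coe.2 (Finset.filter_subset _ _ hy)) hxy
  simpa using h

lemma cells_visited_le (A : Finset ℝ) (q k : ℕ) (hq : 0 < q) (hk : A.card ≤ q * k)
    (γ : ℝ × ℝ) (hγ : γ.1 ≠ 0) :
    ((A.filter (fun x => γ.1*x+γ.2 ∈ A)).image
      (fun x => (blk A q x, blk A q (γ.1*x+γ.2)))).card ≤ 2 * k := by
  set R := A.filter (fun x => γ.1*x+γ.2 ∈ A) with hR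
  set V := R.image (fun x => (blk A q x, blk A q (γ.1*x+γ.2))) with hV
  have hmem : ∀ p ∈ V, p.1 < k ∧ p.2 < k := by
    intro p hp
    obtain ⟨x, hx, rfl⟩ := Finset.mem_image.1 hp
    simp only [hR, Finset.mem_filter] at hx
    exact ⟨blk_lt hq hk hx.1, blk_lt hq hk hx.2⟩
  rcases lt_or_gt_of_ne hγ with hneg | hpos
  · -- negative slope : φ p = p.1 + (k - 1 - p.2)
    have hinj : Set.InjOn (fun p : ℕ × ℕ => p.1 + (k - 1 - p.2)) V := by
      intro p hp p' hp' hφ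
      have h1 := hmem p hp; have h2 := hmem p' hp'
      obtain ⟨x, hx, rfl⟩ := Finset.mem_image.1 hp
      obtain ⟨x', hx', rfl⟩ := Finset.mem_image.1 hp'
      simp only at hφ
      rcases le_total x x' with h | h
      · have e1 : blk A q x ≤ blk A q x' := blk_mono h
        have e2 : blk A q (γ.1*x'+γ.2) ≤ blk A q (γ.1*x+γ.2) :=
          blk_mono (by nlinarith)
        simp only [Prod.mk.injEq]
        omega
      · have e1 : blk A q x' ≤ blk A q x := blk_mono h
        have e2 : blk A q (γ.1*x+γ.2) ≤ blk A q (γ.1*x'+γ.2) :=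
          blk_mono (by nlinarith)
        simp only [Prod.mk.injEq]
        omega
    calc V.card = (V.image (fun p : ℕ × ℕ => p.1 + (k - 1 - p.2))).card :=
          (Finset.card_image_of_injOn hinj).symm
    _ ≤ (Finset.range (2*k)).card := by
        apply Finset.card_le_card
        intro m hm
        obtain ⟨p, hp, rfl⟩ := Finset.mem_image.1 hm
        have := hmem p hp
        simp only [Finset.mem_range]
        omega
    _ = 2*k := Finset.card_range _
  · -- positive slope : φ p = p.1 + p.2
    have hinj : Set.InjOn (fun p : ℕ × ℕ => p.1 + p.2) V := by
      intro p hp p' hp' hφ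
      obtain ⟨x, hx, rfl⟩ := Finset.mem_image.1 hp
      obtain ⟨x', hx', rfl⟩ := Finset.mem_image.1 hp'
      simp only at hφ
      rcases le_total x x' with h | h
      · have e1 : blk A q x ≤ blk A q x' := blk_mono h
        have e2 : blk A q (γ.1*x+γ.2) ≤ blk A q (γ.1*x'+γ.2) :=
          blk_mono (by nlinarith)
        simp only [Prod.mk.injEq]
        omega
      · have e1 : blk A q x' ≤ blk A q x := blk_mono h
        have e2 : blk A q (γ.1*x'+γ.2) ≤ blk A q (γ.1*x+γ.2) :=
          blk_mono (by nlinarith)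
        simp only [Prod.mk.injEq]
        omega
    calc V.card = (V.image (fun p : ℕ × ℕ => p.1 + p.2)).card :=
          (Finset.card_image_of_injOn hinj).symm
    _ ≤ (Finset.range (2*k)).card := by
        apply Finset.card_le_card
        intro m hm
        obtain ⟨p, hp, rfl⟩ := Finset.mem_image.1 hm
        have := hmem p hp
        simp only [Finset.mem_range]
        omega
    _ = 2*k := Finset.card_range _

lemma pair_bound (X Y : Finset ℝ) (D : Finset (ℝ × ℝ)) :
    ∑ γ ∈ D, ((X.filter (fun x => γ.1*x+γ.2 ∈ Y)).card) *
      (((X.filter (fun x => γ.1*x+γ.2 ∈ Y)).card) - 1) ≤ X.card^2 * Y.card^2 := by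
  classical
  -- the quadruple set
  have key : ∀ γ : ℝ × ℝ,
      ((X ×ˢ X).filter (fun p => p.1 ≠ p.2 ∧ γ.1*p.1+γ.2 ∈ Y ∧ γ.1*p.2+γ.2 ∈ Y)).card
      = ((X.filter (fun x => γ.1*x+γ.2 ∈ Y)).card) *
        (((X.filter (fun x => γ.1*x+γ.2 ∈ Y)).card) - 1) := by
    intro γ
    set R := X.filter (fun x => γ.1*x+γ.2 ∈ Y) with hRdef
    have h1 : (X ×ˢ X).filter (fun p => p.1 ≠ p.2 ∧ γ.1*p.1+γ.2 ∈ Y ∧ γ.1*p.2+γ.2 ∈ Y)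
        = (R ×ˢ R).filter (fun p => p.1 ≠ p.2) := by
      ext p
      simp only [Finset.mem_filter, Finset.mem_product, hRdef]
      tauto
    rw [h1]
    have h2 : (R ×ˢ R).filter (fun p => p.1 = p.2) = R.image (fun x => (x, x)) := by
      ext p
      simp only [Finset.mem_filter, Finset.mem_product, Finset.mem_image, Prod.ext_iff]
      constructor
      · rintro ⟨⟨h1, h2⟩, h3⟩; exact ⟨p.1, h1, rfl, h3⟩
      · rintro ⟨x, hx, h1, h2⟩
        refine ⟨⟨h1 ▸ hx, h2 ▸ hx⟩, by rw [← h1, ← h2]⟩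
    have h3 : ((R ×ˢ R).filter (fun p => p.1 = p.2)).card = R.card := by
      rw [h2, Finset.card_image_of_injective _ (fun a b h => (Prod.ext_iff.1 h).1)]
    have h4 := Finset.card_filter_add_card_filter_not
      (s := R ×ˢ R) (p := fun p => p.1 = p.2)
    have h5 : (R ×ˢ R).card = R.card * R.card := Finset.card_product R R
    have h6 : ((R ×ˢ R).filter (fun p => ¬ p.1 = p.2)).card
        = R.card * R.card - R.card := by omega
    have h7 : (R ×ˢ R).filter (fun p => p.1 ≠ p.2)
        = (R ×ˢ R).filter (fun p => ¬ p.1 = p.2) := rfl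
    rw [h7, h6, ← Nat.pred_eq_sub_one, Nat.mul_pred]
  calc ∑ γ ∈ D, ((X.filter (fun x => γ.1*x+γ.2 ∈ Y)).card) *
      (((X.filter (fun x => γ.1*x+γ.2 ∈ Y)).card) - 1)
      = ∑ γ ∈ D, ((X ×ˢ X).filter
          (fun p => p.1 ≠ p.2 ∧ γ.1*p.1+γ.2 ∈ Y ∧ γ.1*p.2+γ.2 ∈ Y)).card := by
        exact Finset.sum_congr rfl (fun γ _ => (key γ).symm)
  _ = ((D ×ˢ (X ×ˢ X)).filter (fun t =>
        t.2.1 ≠ t.2.2 ∧ t.1.1*t.2.1+t.1.2 ∈ Y ∧ t.1.1*t.2.2+t.1.2 ∈ Y)).card := by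
        rw [card_filter_product D (X ×ˢ X)
          (fun γ p => p.1 ≠ p.2 ∧ γ.1*p.1+γ.2 ∈ Y ∧ γ.1*p.2+γ.2 ∈ Y)]
  _ ≤ ((X ×ˢ X) ×ˢ (Y ×ˢ Y)).card := by
        apply Finset.card_le_card_of_injOn
          (fun t => ((t.2.1, t.2.2), (t.1.1*t.2.1+t.1.2, t.1.1*t.2.2+t.1.2)))
        · rintro ⟨γ, x, x'⟩ ht
          simp only [Finset.mem_coe, Finset.mem_filter, Finset.mem_product] at ht ⊢
          exact ⟨⟨ht.1.2.1, ht.1.2.2⟩, ht.2.2.1, ht.2.2.2⟩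
        · rintro ⟨γ, x, x'⟩ ht ⟨δ, u, u'⟩ ht' he
          simp only [Finset.mem_coe, Finset.mem_filter, Finset.mem_product] at ht ht'
          simp only [Prod.mk.injEq] at he
          obtain ⟨⟨e1, e2⟩, e3, e4⟩ := he
          subst e1; subst e2
          have hne : x ≠ x' := ht.2.1
          have hs : γ.1 = δ.1 := by
            have h9 : γ.1 * x - γ.1 * x' = δ.1 * x - δ.1 * x' := by linarith
            have h10 : γ.1 * (x - x') = δ.1 * (x - x') := by ring_nf; ring_nf at h9; linarith
            exact mul_right_cancel₀ (sub_ne_zero.2 hne) h10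
          have hi : γ.2 = δ.2 := by rw [hs] at e3; linarith
          have hγδ : γ = δ := Prod.ext hs hi
          simp [hγδ]
  _ = X.card^2 * Y.card^2 := by
        rw [Finset.card_product, Finset.card_product, Finset.card_product]; ring

lemma rich_split {A : Finset ℝ} {q k : ℕ} (hq : 0 < q) (hk : A.card ≤ q * k)
    (γ : ℝ × ℝ) :
    richA A γ = ∑ c ∈ Finset.range k ×ˢ Finset.range k, ccnt A q γ c := by
  rw [richA]
  rw [Finset.card_eq_sum_card_fiberwise
    (f := fun x => (blk A q x, blk A q (γ.1*x+γ.2)))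
    (t := Finset.range k ×ˢ Finset.range k) (fun x hx => by
      simp only [Finset.mem_coe, Finset.mem_filter] at hx
      simp only [Finset.mem_coe, Finset.mem_product, Finset.mem_range]
      exact ⟨blk_lt hq hk hx.1, blk_lt hq hk hx.2⟩)]
  refine Finset.sum_congr rfl (fun c _ => ?_)
  rw [ccnt]
  congr 1
  apply Finset.filter_congr
  intro x _
  simp [Prod.ext_iff]

lemma cs_solve {t m Q : ℝ} (ht : 0 ≤ t) (hm : 0 ≤ m) (hQ : 0 ≤ Q)
    (h : t^2 ≤ m * (Q^2 + t)) : t ≤ m + Q * Real.sqrt m := by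
  by_contra hcon
  push_neg at hcon
  set s := Real.sqrt m with hs
  have hs0 : 0 ≤ s := Real.sqrt_nonneg m
  have hs2 : s^2 = m := Real.sq_sqrt hm
  rw [← hs2] at h hcon
  nlinarith [mul_nonneg hQ hs0, sq_nonneg (t - s^2 - Q*s), mul_nonneg (mul_nonneg hQ hs0) ht]

theorem grid_incidence (A : Finset ℝ) (D : Finset (ℝ × ℝ)) (hD : ∀ γ ∈ D, γ.1 ≠ 0)
    (k : ℕ) (hk1 : 1 ≤ k) :
    (∑ γ ∈ D, (richA A γ : ℝ)) ≤ 2*k*D.card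
      + ((A.card/k + 1 : ℕ) : ℝ)^2 * k * Real.sqrt (2*k*D.card) := by
  classical
  set q : ℕ := A.card / k + 1 with hqdef
  have hq : 0 < q := Nat.succ_pos _
  have hAqk : A.card ≤ q * k := by
    have h1 := Nat.div_add_mod A.card k
    have h2 : A.card % k < k := Nat.mod_lt _ hk1
    calc A.card = k * (A.card / k) + A.card % k := (Nat.div_add_mod _ _).symm
    _ ≤ k * (A.card / k) + k := by omega
    _ = (A.card / k + 1) * k := by ring
  set cells := Finset.range k ×ˢ Finset.range k with hcells
  -- L_c for a cell c
  set Lc : ℕ × ℕ → Finset (ℝ × ℝ) := fun c => D.filter (fun γ => 0 < ccnt A q γ c)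
    with hLc
  -- step: swap
  have hswap : (∑ γ ∈ D, (richA A γ : ℝ)) = ∑ c ∈ cells, ∑ γ ∈ D, (ccnt A q γ c : ℝ) := by
    rw [Finset.sum_comm]
    refine Finset.sum_congr rfl (fun γ _ => ?_)
    rw [rich_split hq hAqk γ]
    push_cast
    rfl
  -- per cell bound
  have hcell : ∀ c ∈ cells, (∑ γ ∈ D, (ccnt A q γ c : ℝ))
      ≤ (Lc c).card + (q:ℝ)^2 * Real.sqrt ((Lc c).card) := by
    intro c _
    have hrestrict : (∑ γ ∈ D, (ccnt A q γ c : ℝ)) = ∑ γ ∈ Lc c, (ccnt A q γ c : ℝ) := by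
      rw [hLc]
      rw [Finset.sum_filter_of_ne]
      intro γ _ hne
      have : ccnt A q γ c ≠ 0 := by
        intro h0; rw [h0] at hne; simp at hne
      omega
    rw [hrestrict]
    set t := ∑ γ ∈ Lc c, (ccnt A q γ c : ℝ) with hts
    have ht0 : 0 ≤ t := Finset.sum_nonneg (fun γ _ => by positivity)
    -- Cauchy–Schwarz
    have hCS : t^2 ≤ (Lc c).card * ∑ γ ∈ Lc c, (ccnt A q γ c : ℝ)^2 := by
      have h := sq_sum_le_card_mul_sum_sq (s := Lc c)
        (f := fun γ => (ccnt A q γ c : ℝ))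
      rw [hts]
      exact_mod_cast h
    -- second moment bound
    have hmom : ∑ γ ∈ Lc c, (ccnt A q γ c : ℝ)^2 ≤ ((q:ℝ)^2)^2 + t := by
      have hpt : ∀ γ, ccnt A q γ c
          = ((A.filter (fun x => blk A q x = c.1)).filter
              (fun x => γ.1*x+γ.2 ∈ (A.filter (fun y => blk A q y = c.2)))).card := by
        intro γ
        rw [ccnt]
        congr 1
        ext x
        simp only [Finset.mem_filter]
        tauto
      have hpair := pair_bound (A.filter (fun x => blk A q x = c.1))
        (A.filter (fun y => blk A q y = c.2)) (Lc c)
      have hX := blk_size (A := A) hq c.1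
      have hY := blk_size (A := A) hq c.2
      have hpair2 : ∑ γ ∈ Lc c, (ccnt A q γ c) * (ccnt A q γ c - 1) ≤ q^2 * q^2 := by
        calc ∑ γ ∈ Lc c, (ccnt A q γ c) * (ccnt A q γ c - 1)
            = ∑ γ ∈ Lc c, ((A.filter (fun x => blk A q x = c.1)).filter
              (fun x => γ.1*x+γ.2 ∈ (A.filter (fun y => blk A q y = c.2)))).card *
              (((A.filter (fun x => blk A q x = c.1)).filter
              (fun x => γ.1*x+γ.2 ∈ (A.filter (fun y => blk A q y = c.2)))).card - 1) := by
              refine Finset.sum_congr rfl (fun γ _ => ?_)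
              rw [← hpt γ]
        _ ≤ (A.filter (fun x => blk A q x = c.1)).card^2
              * (A.filter (fun y => blk A q y = c.2)).card^2 := hpair
        _ ≤ q^2 * q^2 := by
              apply Nat.mul_le_mul <;> exact Nat.pow_le_pow_left (by assumption) 2
      -- now n² ≤ n(n-1) + n pointwise
      have hsq : ∀ γ ∈ Lc c, (ccnt A q γ c : ℝ)^2
          ≤ ((ccnt A q γ c) * (ccnt A q γ c - 1) : ℕ) + (ccnt A q γ c : ℝ) := by
        intro γ _
        have : (ccnt A q γ c) * (ccnt A q γ c - 1) + (ccnt A q γ c)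
            = (ccnt A q γ c)^2 := by
          rcases Nat.eq_zero_or_pos (ccnt A q γ c) with h | h
          · simp [h]
          · rw [← Nat.pred_eq_sub_one, Nat.mul_pred]
            have h2 : ccnt A q γ c ≤ ccnt A q γ c * ccnt A q γ c :=
              Nat.le_mul_of_pos_left _ h
            rw [pow_two]
            omega
        refine le_of_eq ?_
        calc (ccnt A q γ c : ℝ)^2 = (((ccnt A q γ c)^2 : ℕ) : ℝ) := by push_cast; ring
        _ = (((ccnt A q γ c) * (ccnt A q γ c - 1) + ccnt A q γ c : ℕ) : ℝ) := by rw [this]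
        _ = ((ccnt A q γ c) * (ccnt A q γ c - 1) : ℕ) + (ccnt A q γ c : ℝ) := by
            rw [Nat.cast_add]
      calc ∑ γ ∈ Lc c, (ccnt A q γ c : ℝ)^2
          ≤ ∑ γ ∈ Lc c, (((ccnt A q γ c) * (ccnt A q γ c - 1) : ℕ) + (ccnt A q γ c : ℝ)) :=
            Finset.sum_le_sum hsq
      _ = ((∑ γ ∈ Lc c, (ccnt A q γ c) * (ccnt A q γ c - 1) : ℕ) : ℝ) + t := by
            rw [Finset.sum_add_distrib]
            push_cast
            ring
      _ ≤ ((q^2 * q^2 : ℕ) : ℝ) + t := by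
            have := hpair2
            have hc : ((∑ γ ∈ Lc c, (ccnt A q γ c) * (ccnt A q γ c - 1) : ℕ) : ℝ)
                ≤ ((q^2 * q^2 : ℕ) : ℝ) := by exact_mod_cast this
            linarith
      _ = ((q:ℝ)^2)^2 + t := by push_cast; ring
    have hfinal : t^2 ≤ ((Lc c).card : ℝ) * (((q:ℝ)^2)^2 + t) := by
      calc t^2 ≤ (Lc c).card * ∑ γ ∈ Lc c, (ccnt A q γ c : ℝ)^2 := hCS
      _ ≤ ((Lc c).card : ℝ) * (((q:ℝ)^2)^2 + t) := by
          apply mul_le_mul_of_nonneg_left hmom (by positivity)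
    exact cs_solve ht0 (by positivity) (by positivity) hfinal
  -- sum the per-cell bounds
  have hLcsum : (∑ c ∈ cells, ((Lc c).card : ℝ)) ≤ 2*k*D.card := by
    have hswap2 : (∑ c ∈ cells, ((Lc c).card : ℕ))
        = ∑ γ ∈ D, (cells.filter (fun c => 0 < ccnt A q γ c)).card := by
      simp only [hLc, Finset.card_filter]
      rw [Finset.sum_comm]
    have hbnd : ∀ γ ∈ D, (cells.filter (fun c => 0 < ccnt A q γ c)).card ≤ 2*k := by
      intro γ hγ
      refine le_trans (Finset.card_le_card ?_) (cells_visited_le A q k hq hAqk γ (hD γ hγ))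
      intro c hc
      simp only [Finset.mem_filter] at hc
      obtain ⟨hc1, hc2⟩ := hc
      rw [ccnt] at hc2
      rw [Finset.card_pos] at hc2
      obtain ⟨x, hx⟩ := hc2
      simp only [Finset.mem_filter] at hx
      apply Finset.mem_image.2
      exact ⟨x, by simp [Finset.mem_filter, hx.1.1, hx.1.2], by
        obtain ⟨h1, h2⟩ := hx.2
        ext <;> simp [h1, h2]⟩
    have : (∑ c ∈ cells, ((Lc c).card : ℕ)) ≤ 2*k*D.card := by
      rw [hswap2]
      calc ∑ γ ∈ D, (cells.filter (fun c => 0 < ccnt A q γ c)).card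
          ≤ ∑ γ ∈ D, 2*k := Finset.sum_le_sum hbnd
      _ = 2*k*D.card := by rw [Finset.sum_const, smul_eq_mul]; ring
    calc (∑ c ∈ cells, ((Lc c).card : ℝ)) = ((∑ c ∈ cells, (Lc c).card : ℕ) : ℝ) := by
          push_cast; rfl
    _ ≤ ((2*k*D.card : ℕ) : ℝ) := by exact_mod_cast this
    _ = 2*k*D.card := by push_cast; ring
  have hsqrtsum : (∑ c ∈ cells, Real.sqrt ((Lc c).card))
      ≤ (k : ℝ) * Real.sqrt (2*k*D.card) := by
    have hCS2 : (∑ c ∈ cells, Real.sqrt ((Lc c).card))^2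
        ≤ (cells.card : ℝ) * ∑ c ∈ cells, ((Lc c).card : ℝ) := by
      have := sq_sum_le_card_mul_sum_sq (s := cells)
        (f := fun c => Real.sqrt ((Lc c).card))
      have heq : ∀ c ∈ cells, (Real.sqrt ((Lc c).card))^2 = ((Lc c).card : ℝ) :=
        fun c _ => Real.sq_sqrt (by positivity)
      calc (∑ c ∈ cells, Real.sqrt ((Lc c).card))^2
          ≤ (cells.card : ℝ) * ∑ c ∈ cells, (Real.sqrt ((Lc c).card))^2 := by
            exact_mod_cast this
      _ = (cells.card : ℝ) * ∑ c ∈ cells, ((Lc c).card : ℝ) := by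
            rw [Finset.sum_congr rfl heq]
    have hcard : (cells.card : ℝ) = (k:ℝ)^2 := by
      rw [hcells, Finset.card_product, Finset.card_range]; push_cast; ring
    have h2 : (∑ c ∈ cells, Real.sqrt ((Lc c).card))^2 ≤ (k:ℝ)^2 * (2*k*D.card) := by
      rw [hcard] at hCS2
      calc (∑ c ∈ cells, Real.sqrt ((Lc c).card))^2
          ≤ (k:ℝ)^2 * ∑ c ∈ cells, ((Lc c).card : ℝ) := hCS2
      _ ≤ (k:ℝ)^2 * (2*k*D.card) := by
          apply mul_le_mul_of_nonneg_left hLcsum (by positivity)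
    have h3 : (0:ℝ) ≤ ∑ c ∈ cells, Real.sqrt ((Lc c).card) :=
      Finset.sum_nonneg (fun c _ => Real.sqrt_nonneg _)
    calc ∑ c ∈ cells, Real.sqrt ((Lc c).card)
        = Real.sqrt ((∑ c ∈ cells, Real.sqrt ((Lc c).card))^2) :=
          (Real.sqrt_sq h3).symm
    _ ≤ Real.sqrt ((k:ℝ)^2 * (2*k*D.card)) := Real.sqrt_le_sqrt h2
    _ = (k:ℝ) * Real.sqrt (2*k*D.card) := by
        rw [Real.sqrt_mul (by positivity), Real.sqrt_sq (by positivity)]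
  -- combine
  calc (∑ γ ∈ D, (richA A γ : ℝ)) = ∑ c ∈ cells, ∑ γ ∈ D, (ccnt A q γ c : ℝ) := hswap
  _ ≤ ∑ c ∈ cells, (((Lc c).card : ℝ) + (q:ℝ)^2 * Real.sqrt ((Lc c).card)) :=
      Finset.sum_le_sum hcell
  _ = (∑ c ∈ cells, ((Lc c).card : ℝ)) + (q:ℝ)^2 * ∑ c ∈ cells, Real.sqrt ((Lc c).card) := by
      rw [Finset.sum_add_distrib, Finset.mul_sum]
  _ ≤ 2*k*D.card + (q:ℝ)^2 * ((k:ℝ) * Real.sqrt (2*k*D.card)) := by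
      have := mul_le_mul_of_nonneg_left hsqrtsum (by positivity : (0:ℝ) ≤ (q:ℝ)^2)
      linarith
  _ = 2*k*D.card + ((A.card/k + 1 : ℕ) : ℝ)^2 * k * Real.sqrt (2*k*D.card) := by
      rw [hqdef]; ring

theorem rich_bound (A : Finset ℝ) (D : Finset (ℝ × ℝ)) (τ : ℕ) (hτ : 2 ≤ τ)
    (hs : ∀ γ ∈ D, γ.1 ≠ 0) (hr : ∀ γ ∈ D, τ ≤ richA A γ) :
    (D.card : ℝ) * (τ:ℝ)^3 ≤ 2048 * (A.card:ℝ)^4 := by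
  classical
  rcases Nat.eq_zero_or_pos D.card with hD0 | hD0
  · rw [hD0]; simp
  have hA4 : (0:ℝ) ≤ (A.card:ℝ)^4 := by positivity
  by_cases hsmall : τ < 16
  · -- small τ: use the pair bound directly
    have h1 : ∑ γ ∈ D, (richA A γ) * (richA A γ - 1) ≤ A.card^2 * A.card^2 :=
      pair_bound A A D
    have h2 : ∀ γ ∈ D, 2 ≤ (richA A γ) * (richA A γ - 1) := by
      intro γ hγ
      have := hr γ hγ
      have h3 : 2 ≤ richA A γ := le_trans hτ this
      have : 1 ≤ richA A γ - 1 := by omega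
      calc 2 = 2 * 1 := by ring
      _ ≤ (richA A γ) * (richA A γ - 1) := Nat.mul_le_mul h3 this
    have h4 : 2 * D.card ≤ A.card^2 * A.card^2 := by
      calc 2 * D.card = ∑ _γ ∈ D, 2 := by rw [Finset.sum_const, smul_eq_mul]; ring
      _ ≤ ∑ γ ∈ D, (richA A γ) * (richA A γ - 1) := Finset.sum_le_sum h2
      _ ≤ A.card^2 * A.card^2 := h1
    have h5 : (2:ℝ) * D.card ≤ (A.card:ℝ)^4 := by
      have : ((2 * D.card : ℕ):ℝ) ≤ ((A.card^2 * A.card^2 : ℕ):ℝ) := by exact_mod_cast h4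
      push_cast at this
      nlinarith [this]
    have h6 : ((τ:ℝ))^3 ≤ 4096 := by
      have h16 : (τ:ℝ) ≤ 16 := by exact_mod_cast Nat.le_of_lt_succ (by omega)
      have hτ0 : (0:ℝ) ≤ τ := by positivity
      have h7 := pow_le_pow_left₀ hτ0 h16 3
      norm_num at h7
      exact h7
    calc (D.card : ℝ) * (τ:ℝ)^3 ≤ (D.card:ℝ) * 4096 := by
          apply mul_le_mul_of_nonneg_left h6 (by positivity)
    _ = 2048 * (2 * D.card) := by ring
    _ ≤ 2048 * (A.card:ℝ)^4 := by linarith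
  · -- large τ
    push_neg at hsmall
    -- D nonempty gives τ ≤ A.card
    have hτA : τ ≤ A.card := by
      obtain ⟨γ, hγ⟩ := Finset.card_pos.1 hD0
      exact le_trans (hr γ hγ) (Finset.card_le_card (Finset.filter_subset _ _))
    set k : ℕ := τ / 8 with hkdef
    have hk1 : 1 ≤ k := by omega
    have hkτ : 8 * k ≤ τ := by omega
    have hτk : τ ≤ 16 * k := by omega
    have hkA : k ≤ A.card := by omega
    set q : ℕ := A.card / k + 1 with hqdef
    have hqk2A : q * k ≤ 2 * A.card := by
      have h1 : (A.card / k) * k ≤ A.card := Nat.div_mul_le_self _ _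
      have : q * k = (A.card/k)*k + k := by rw [hqdef]; ring
      omega
    have hgrid := grid_incidence A D hs k hk1
    have hlow : (τ:ℝ) * D.card ≤ ∑ γ ∈ D, (richA A γ : ℝ) := by
      calc (τ:ℝ) * D.card = ∑ _γ ∈ D, (τ:ℝ) := by
            rw [Finset.sum_const, nsmul_eq_mul]; ring
      _ ≤ ∑ γ ∈ D, (richA A γ : ℝ) :=
            Finset.sum_le_sum (fun γ hγ => by exact_mod_cast hr γ hγ)
    -- main chain
    set d : ℝ := (D.card : ℝ) with hd
    set T : ℝ := (τ : ℝ) with hT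
    set K : ℝ := (k : ℝ) with hK
    set Q : ℝ := (q : ℝ) with hQ
    have hd0 : 1 ≤ d := by rw [hd]; exact_mod_cast hD0
    have hK0 : 1 ≤ K := by rw [hK]; exact_mod_cast hk1
    have hT0 : (16:ℝ) ≤ T := by rw [hT]; exact_mod_cast hsmall
    have hTK : T ≤ 16 * K := by rw [hT, hK]; exact_mod_cast hτk
    have hKT : 8 * K ≤ T := by rw [hK, hT]; exact_mod_cast hkτ
    have hQK : Q * K ≤ 2 * (A.card:ℝ) := by
      rw [hQ, hK]; exact_mod_cast hqk2A
    have hQ0 : 1 ≤ Q := by rw [hQ]; exact_mod_cast Nat.succ_le_succ (Nat.zero_le _)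
    set s : ℝ := Real.sqrt (2*K*d) with hsq
    have hs0 : 0 ≤ s := Real.sqrt_nonneg _
    have hs2 : s^2 = 2*K*d := Real.sq_sqrt (by nlinarith)
    have hmain : T * d ≤ 2*K*d + Q^2*K*s := le_trans hlow hgrid
    have hhalf : (T/2) * d ≤ Q^2*K*s := by
      have h2K : 2*K ≤ T/2 := by linarith
      have hd0'' : (0:ℝ) ≤ d := by linarith
      have := mul_le_mul_of_nonneg_right h2K hd0''
      linarith
    have hlhs0 : (0:ℝ) ≤ T/2*d := mul_nonneg (by linarith) (by linarith)
    have hsqr : (T/2*d)^2 ≤ (Q^2*K)^2 * (2*K*d) := by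
      calc (T/2*d)^2 ≤ (Q^2*K*s)^2 := pow_le_pow_left₀ hlhs0 hhalf 2
      _ = (Q^2*K)^2 * s^2 := by ring
      _ = (Q^2*K)^2 * (2*K*d) := by rw [hs2]
    have h1 : T^2*d^2/4 ≤ 2*Q^4*K^3*d := by
      calc T^2*d^2/4 = (T/2*d)^2 := by ring
      _ ≤ (Q^2*K)^2 * (2*K*d) := hsqr
      _ = 2*Q^4*K^3*d := by ring
    have hcancel : T^2 * d ≤ 8 * Q^4 * K^3 := by
      have h2 : (T^2*d)*d ≤ (8*Q^4*K^3)*d := by linarith [h1]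
      have hd0' : (0:ℝ) < d := by linarith
      exact le_of_mul_le_mul_right h2 hd0'
    have hT2d : (0:ℝ) ≤ T^2*d := mul_nonneg (sq_nonneg T) (by linarith)
    calc d * T^3 = T * (T^2 * d) := by ring
    _ ≤ 16*K*(T^2*d) := mul_le_mul_of_nonneg_right hTK hT2d
    _ ≤ 16*K*(8*Q^4*K^3) := by
        apply mul_le_mul_of_nonneg_left hcancel (by linarith)
    _ = 128 * (Q*K)^4 := by ring
    _ ≤ 128 * (2*(A.card:ℝ))^4 := by
        have h0 : (0:ℝ) ≤ Q*K := mul_nonneg (by linarith) (by linarith)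
        have h8 := pow_le_pow_left₀ h0 hQK 4
        linarith
    _ = 2048 * (A.card:ℝ)^4 := by ring

lemma dyadic_sum (α β : ℝ) (hα : 0 ≤ α) (hβ : 0 ≤ β) (n : ℕ) :
    ∑ j ∈ Finset.Icc 1 n, min (α * 2^j) (β * ((Real.sqrt 2)⁻¹)^j)
      ≤ 6 * α^((1:ℝ)/3) * β^((2:ℝ)/3) := by
  classical
  have hr2 : (1:ℝ) < Real.sqrt 2 := by
    rw [show (1:ℝ) = Real.sqrt 1 by simp]
    exact Real.sqrt_lt_sqrt (by norm_num) (by norm_num)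
  set r : ℝ := (Real.sqrt 2)⁻¹ with hrdef
  have hr0 : 0 < r := by positivity
  have hr1 : r < 1 := by
    rw [hrdef, inv_lt_one_iff₀]; right; exact hr2
  have hr7 : r ≤ 5/7 := by
    rw [hrdef]
    rw [inv_le_iff_one_le_mul₀ (by positivity)]
    have h14 : (7:ℝ)/5 ≤ Real.sqrt 2 := by
      rw [show (7:ℝ)/5 = Real.sqrt ((7/5)^2) by rw [Real.sqrt_sq (by norm_num)]]
      apply Real.sqrt_le_sqrt; norm_num
    nlinarith [Real.sqrt_nonneg 2]
  rcases eq_or_lt_of_le hα with h0 | hα0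
  · -- α = 0
    have : ∀ j ∈ Finset.Icc 1 n, min (α * 2^j) (β * r^j) ≤ 0 := by
      intro j _
      apply le_trans (min_le_left _ _)
      rw [← h0]; simp
    calc ∑ j ∈ Finset.Icc 1 n, min (α * 2^j) (β * r^j) ≤ 0 :=
          Finset.sum_nonpos this
    _ ≤ 6 * α^((1:ℝ)/3) * β^((2:ℝ)/3) := by positivity
  rcases eq_or_lt_of_le hβ with h0 | hβ0
  · have : ∀ j ∈ Finset.Icc 1 n, min (α * 2^j) (β * r^j) ≤ 0 := by
      intro j _
      apply le_trans (min_le_right _ _)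
      rw [← h0]; simp
    calc ∑ j ∈ Finset.Icc 1 n, min (α * 2^j) (β * r^j) ≤ 0 :=
          Finset.sum_nonpos this
    _ ≤ 6 * α^((1:ℝ)/3) * β^((2:ℝ)/3) := by positivity
  -- now α, β > 0
  set T : ℝ := (β/α)^((2:ℝ)/3) with hTdef
  have hT0 : 0 < T := Real.rpow_pos_of_pos (by positivity) _
  set S1 := (Finset.Icc 1 n).filter (fun j => (2:ℝ)^j ≤ T) with hS1
  set S2 := (Finset.Icc 1 n).filter (fun j => ¬ ((2:ℝ)^j ≤ T)) with hS2
  have hsplit : ∑ j ∈ Finset.Icc 1 n, min (α * 2^j) (β * r^j)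
      = ∑ j ∈ S1, min (α * 2^j) (β * r^j) + ∑ j ∈ S2, min (α * 2^j) (β * r^j) :=
    (Finset.sum_filter_add_sum_filter_not _ _ _).symm
  have hbound1 : ∑ j ∈ S1, min (α * 2^j) (β * r^j) ≤ 2 * (α * T) := by
    rcases Finset.eq_empty_or_nonempty S1 with he | hne
    · rw [he]; simp; positivity
    · set m := S1.max' hne with hm
      have hmem : (2:ℝ)^m ≤ T := (Finset.mem_filter.1 (S1.max'_mem hne)).2
      have hsub : S1 ⊆ Finset.range (m+1) := by
        intro j hj
        rw [Finset.mem_range]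
        exact Nat.lt_succ_of_le (Finset.le_max' _ _ hj)
      calc ∑ j ∈ S1, min (α * 2^j) (β * r^j) ≤ ∑ j ∈ S1, α * 2^j :=
            Finset.sum_le_sum (fun j _ => min_le_left _ _)
      _ ≤ ∑ j ∈ Finset.range (m+1), α * 2^j := by
            apply Finset.sum_le_sum_of_subset_of_nonneg hsub
            intro j _ _; positivity
      _ = α * ∑ j ∈ Finset.range (m+1), (2:ℝ)^j := by rw [Finset.mul_sum]
      _ = α * (2^(m+1) - 1) := by
            rw [geom_sum_eq (by norm_num : (2:ℝ) ≠ 1)]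
            norm_num
      _ ≤ α * (2 * 2^m) := by
            apply mul_le_mul_of_nonneg_left _ hα
            rw [pow_succ]; nlinarith [pow_pos (by norm_num : (0:ℝ) < 2) m]
      _ ≤ 2 * (α * T) := by nlinarith
  have hbound2 : ∑ j ∈ S2, min (α * 2^j) (β * r^j) ≤ 4 * (β * T^(-(1:ℝ)/2)) := by
    rcases Finset.eq_empty_or_nonempty S2 with he | hne
    · rw [he, Finset.sum_empty]; positivity
    · set m := S2.min' hne with hm
      have hmem : T < (2:ℝ)^m :=
        lt_of_not_ge (Finset.mem_filter.1 (S2.min'_mem hne)).2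
      have hmn : m ≤ n :=
        (Finset.mem_Icc.1 (Finset.mem_filter.1 (S2.min'_mem hne)).1).2
      have hsub : S2 ⊆ Finset.Ico m (n+1) := by
        intro j hj
        rw [Finset.mem_Ico]
        constructor
        · exact Finset.min'_le _ _ hj
        · have := (Finset.mem_Icc.1 (Finset.mem_filter.1 hj).1).2
          omega
      have hgeo : ∑ j ∈ Finset.Ico m (n+1), r^j ≤ r^m * (7/2) := by
        rw [geom_sum_Ico (by intro h; rw [h] at hr1; linarith) (by omega)]
        have key : (r^(n+1) - r^m)/(r - 1) = (r^m - r^(n+1))/(1 - r) := by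
          have hrne : r - 1 ≠ 0 := sub_ne_zero.2 (ne_of_lt hr1)
          have hrne' : 1 - r ≠ 0 := sub_ne_zero.2 (ne_of_gt (by linarith : r < 1))
          rw [div_eq_div_iff hrne hrne']
          ring
        rw [key]
        have h1 : r^m - r^(n+1) ≤ r^m := by
          have : 0 ≤ r^(n+1) := by positivity
          linarith
        have h2 : (0:ℝ) < 1 - r := by linarith
        have h3 : 1/(1-r) ≤ 7/2 := by
          rw [div_le_iff₀ h2]
          nlinarith
        calc (r^m - r^(n+1))/(1 - r) ≤ r^m/(1-r) := (div_le_div_iff_of_pos_right h2).mpr h1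
        _ = r^m * (1/(1-r)) := by ring
        _ ≤ r^m * (7/2) := by
              apply mul_le_mul_of_nonneg_left h3 (by positivity)
      have hrm : r^m ≤ T^(-(1:ℝ)/2) := by
        have e0 : (Real.sqrt 2)⁻¹ = (2:ℝ)^(-((1:ℝ)/2)) := by
          rw [Real.sqrt_eq_rpow, ← Real.rpow_neg (by norm_num)]
        have e1 : r^m = ((2:ℝ)^m)^(-((1:ℝ)/2)) := by
          rw [hrdef, e0, ← Real.rpow_natCast ((2:ℝ)^(-((1:ℝ)/2))) m,
            ← Real.rpow_mul (by norm_num), ← Real.rpow_natCast (2:ℝ) m,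
            ← Real.rpow_mul (by norm_num)]
          ring_nf
        rw [e1, show -(1:ℝ)/2 = -((1:ℝ)/2) by ring]
        exact Real.rpow_le_rpow_of_nonpos hT0 (le_of_lt hmem) (by norm_num)
      calc ∑ j ∈ S2, min (α * 2^j) (β * r^j) ≤ ∑ j ∈ S2, β * r^j :=
            Finset.sum_le_sum (fun j _ => min_le_right _ _)
      _ ≤ ∑ j ∈ Finset.Ico m (n+1), β * r^j := by
            apply Finset.sum_le_sum_of_subset_of_nonneg hsub
            intro j _ _; positivity
      _ = β * ∑ j ∈ Finset.Ico m (n+1), r^j := by rw [Finset.mul_sum]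
      _ ≤ β * (r^m * (7/2)) := mul_le_mul_of_nonneg_left hgeo hβ
      _ ≤ β * (T^(-(1:ℝ)/2) * (7/2)) := by
            apply mul_le_mul_of_nonneg_left _ hβ
            apply mul_le_mul_of_nonneg_right hrm (by norm_num)
      _ ≤ 4 * (β * T^(-(1:ℝ)/2)) := by
            have h0 : 0 ≤ T^(-(1:ℝ)/2) := le_of_lt (Real.rpow_pos_of_pos hT0 _)
            nlinarith
  -- identify the two expressions
  have hx1 : α * T = α^((1:ℝ)/3) * β^((2:ℝ)/3) := by
    rw [hTdef, Real.div_rpow (le_of_lt hβ0) (le_of_lt hα0)]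
    have h1 : α^((1:ℝ)/3) = α / α^((2:ℝ)/3) := by
      rw [eq_div_iff (ne_of_gt (Real.rpow_pos_of_pos hα0 _)), ← Real.rpow_add hα0]
      norm_num
    rw [h1]
    field_simp
  have hx2 : β * T^(-(1:ℝ)/2) = α^((1:ℝ)/3) * β^((2:ℝ)/3) := by
    have e1 : T^(-(1:ℝ)/2) = (β/α)^(-((1:ℝ)/3)) := by
      rw [hTdef, ← Real.rpow_mul (by positivity)]
      norm_num
    rw [e1, Real.rpow_neg (by positivity), Real.div_rpow (le_of_lt hβ0) (le_of_lt hα0)]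
    rw [inv_div]
    have h1 : β^((2:ℝ)/3) = β / β^((1:ℝ)/3) := by
      rw [eq_div_iff (ne_of_gt (Real.rpow_pos_of_pos hβ0 _)), ← Real.rpow_add hβ0]
      norm_num
    rw [h1]
    field_simp
  rw [hsplit]
  rw [hx1] at hbound1
  rw [hx2] at hbound2
  linarith

lemma sum_nB_sq_le (A B : Finset ℝ) (L : Finset (ℝ × ℝ)) (hL : ∀ l ∈ L, l.1 ≠ 0) :
    ∑ y ∈ B, (nB A L y)^2 ≤ ∑ p ∈ L ×ˢ L, richA A (gm p) := by
  classical
  have hexp : ∀ y, (nB A L y)^2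
      = ∑ p ∈ L ×ˢ L, (if (p.1.1⁻¹ * (y - p.1.2) ∈ A ∧ p.2.1⁻¹ * (y - p.2.2) ∈ A)
          then 1 else 0) := by
    intro y
    rw [nB, Finset.card_filter, pow_two, Finset.sum_mul_sum, Finset.sum_product]
    refine Finset.sum_congr rfl (fun l1 _ => ?_)
    refine Finset.sum_congr rfl (fun l2 _ => ?_)
    by_cases h1 : l1.1⁻¹ * (y - l1.2) ∈ A <;>
      by_cases h2 : l2.1⁻¹ * (y - l2.2) ∈ A <;> simp [h1, h2]
  have hswap : ∑ y ∈ B, (nB A L y)^2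
      = ∑ p ∈ L ×ˢ L, (B.filter (fun y =>
          p.1.1⁻¹ * (y - p.1.2) ∈ A ∧ p.2.1⁻¹ * (y - p.2.2) ∈ A)).card := by
    rw [Finset.sum_congr rfl (fun y _ => hexp y), Finset.sum_comm]
    refine Finset.sum_congr rfl (fun p _ => ?_)
    rw [Finset.card_filter]
  rw [hswap]
  apply Finset.sum_le_sum
  rintro ⟨l1, l2⟩ hp
  simp only [Finset.mem_product] at hp
  have h1 : l1.1 ≠ 0 := hL l1 hp.1
  have h2 : l2.1 ≠ 0 := hL l2 hp.2
  rw [richA]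
  apply Finset.card_le_card_of_injOn (fun y => l1.1⁻¹ * (y - l1.2))
  · intro y hy
    simp only [Finset.mem_coe, Finset.mem_filter] at hy ⊢
    obtain ⟨hyB, hx1, hx2⟩ := hy
    refine ⟨hx1, ?_⟩
    have : (gm (l1, l2)).1 * (l1.1⁻¹ * (y - l1.2)) + (gm (l1, l2)).2
        = l2.1⁻¹ * (y - l2.2) := by
      simp only [gm, acomp, ainv]
      field_simp
      ring
    rw [this]
    exact hx2
  · intro y hy y' hy' he
    simp only at he
    have := mul_left_cancel₀ (inv_ne_zero h1) he
    linarith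

lemma energy_eq_card (L : Finset (ℝ × ℝ)) :
    affEnergy L = (((L ×ˢ L) ×ˢ (L ×ˢ L)).filter
      (fun w => gm w.1 = gm w.2)).card := by
  classical
  have hset : {q : (ℝ × ℝ) × (ℝ × ℝ) × (ℝ × ℝ) × (ℝ × ℝ) |
      q.1 ∈ L ∧ q.2.1 ∈ L ∧ q.2.2.1 ∈ L ∧ q.2.2.2 ∈ L ∧
      acomp (ainv q.1) q.2.1 = acomp (ainv q.2.2.1) q.2.2.2}
      = ↑((L ×ˢ (L ×ˢ (L ×ˢ L))).filter
        (fun q => acomp (ainv q.1) q.2.1 = acomp (ainv q.2.2.1) q.2.2.2)) := by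
    ext q
    simp only [Set.mem_setOf_eq, Finset.coe_filter, Finset.mem_product]
    tauto
  rw [affEnergy, hset, Set.ncard_coe_finset]
  apply Finset.card_bij (fun q _ => ((q.2.1, q.1), (q.2.2.2, q.2.2.1)))
  · rintro ⟨l1, l2, l3, l4⟩ hq
    simp only [Finset.mem_filter, Finset.mem_product] at hq ⊢
    obtain ⟨⟨m1, m2, m3, m4⟩, he⟩ := hq
    exact ⟨⟨⟨m2, m1⟩, m4, m3⟩, he⟩
  · rintro ⟨l1, l2, l3, l4⟩ _ ⟨m1, m2, m3, m4⟩ _ he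
    simp only [Prod.mk.injEq] at he
    obtain ⟨⟨e1, e2⟩, e3, e4⟩ := he
    simp [e1, e2, e3, e4]
  · rintro ⟨⟨p1, p2⟩, p3, p4⟩ hw
    simp only [Finset.mem_filter, Finset.mem_product] at hw
    refine ⟨(p2, p1, p4, p3), ?_, rfl⟩
    simp only [Finset.mem_filter, Finset.mem_product]
    exact ⟨⟨hw.1.1.2, hw.1.1.1, hw.1.2.2, hw.1.2.1⟩, hw.2⟩

lemma energy_fiber (L : Finset (ℝ × ℝ)) :
    affEnergy L = ∑ γ ∈ (L ×ˢ L).image gm, (rfib L γ)^2 := by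
  classical
  rw [energy_eq_card]
  have h1 : (((L ×ˢ L) ×ˢ (L ×ˢ L)).filter (fun w => gm w.1 = gm w.2)).card
      = ∑ p ∈ L ×ˢ L, rfib L (gm p) := by
    rw [Finset.card_filter, Finset.sum_product]
    refine Finset.sum_congr rfl (fun p _ => ?_)
    rw [rfib, Finset.card_filter]
    refine Finset.sum_congr rfl (fun p' _ => ?_)
    show (if gm p = gm p' then (1:ℕ) else 0) = if gm p' = gm p then 1 else 0
    by_cases h : gm p = gm p'
    · rw [if_pos h, if_pos h.symm]
    · rw [if_neg h, if_neg (fun hh : gm p' = gm p => h hh.symm)]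
  rw [h1, Finset.sum_comp]
  refine Finset.sum_congr rfl (fun γ _ => ?_)
  rw [smul_eq_mul, pow_two, rfib]

lemma level_sq (A : Finset ℝ) (L : Finset (ℝ × ℝ)) (τ : ℕ) :
    ((((L ×ˢ L).filter (fun p => τ ≤ richA A (gm p))).card : ℝ))^2
      ≤ ((((L ×ˢ L).filter (fun p => τ ≤ richA A (gm p))).image gm).card : ℝ)
        * ((∑ γ ∈ (L ×ˢ L).image gm, (rfib L γ)^2 : ℕ) : ℝ) := by
  classical
  set Pj := (L ×ˢ L).filter (fun p => τ ≤ richA A (gm p)) with hPj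
  set Dj := Pj.image gm with hDj
  have hcard : Pj.card = ∑ γ ∈ Dj, rfib L γ := by
    rw [Finset.card_eq_sum_card_fiberwise
      (f := gm) (t := Dj) (fun p hp => Finset.mem_image_of_mem _ hp)]
    refine Finset.sum_congr rfl (fun γ hγ => ?_)
    congr 1
    ext p
    simp only [hPj, Finset.mem_filter, rfib]
    constructor
    · rintro ⟨⟨h1, _⟩, h3⟩
      exact ⟨h1, h3⟩
    · rintro ⟨h1, h2⟩
      refine ⟨⟨h1, ?_⟩, h2⟩
      obtain ⟨p0, hp0, hgp0⟩ := Finset.mem_image.1 hγ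
      have h5 := (Finset.mem_filter.1 hp0).2
      rw [hgp0] at h5
      rw [h2]
      exact h5
  have hCS : ((Pj.card : ℝ))^2 ≤ (Dj.card : ℝ) * ∑ γ ∈ Dj, ((rfib L γ : ℝ))^2 := by
    rw [hcard]
    have := sq_sum_le_card_mul_sum_sq (s := Dj) (f := fun γ => ((rfib L γ : ℕ) : ℝ))
    push_cast
    exact_mod_cast this
  have hsub : ∑ γ ∈ Dj, ((rfib L γ : ℝ))^2
      ≤ ((∑ γ ∈ (L ×ˢ L).image gm, (rfib L γ)^2 : ℕ) : ℝ) := by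
    push_cast
    apply Finset.sum_le_sum_of_subset_of_nonneg
    · rw [hDj, hPj]
      exact Finset.image_subset_image (Finset.filter_subset _ _)
    · intro γ _ _; positivity
  calc ((Pj.card : ℝ))^2 ≤ (Dj.card : ℝ) * ∑ γ ∈ Dj, ((rfib L γ : ℝ))^2 := hCS
  _ ≤ (Dj.card : ℝ) * ((∑ γ ∈ (L ×ˢ L).image gm, (rfib L γ)^2 : ℕ) : ℝ) :=
      mul_le_mul_of_nonneg_left hsub (by positivity)

lemma ptwise_dyadic {a J : ℕ} (hJ : a ≤ J) :
    a ≤ 1 + ∑ j ∈ Finset.Icc 1 J, 2^j * (if 2^j ≤ a then 1 else 0) := by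
  rcases le_or_gt a 1 with h | h
  · exact le_trans h (Nat.le_add_right 1 _)
  · set k := Nat.log 2 a with hk
    have hk1 : 1 ≤ k := Nat.log_pos (by norm_num) (by omega)
    have hk2 : 2^k ≤ a := Nat.pow_log_le_self 2 (by omega)
    have hk3 : a < 2^(k+1) := Nat.lt_pow_succ_log_self (by norm_num) a
    have hkJ : k ≤ J := by
      have := Nat.lt_two_pow_self (n := k)
      omega
    have hgeom : ∀ m : ℕ, ∑ j ∈ Finset.Icc 1 m, 2^j = 2^(m+1) - 2 := by
      intro m
      induction m with
      | zero => simp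
      | succ m ih =>
        rw [Finset.sum_Icc_succ_top (by omega), ih]
        have h1 : 2 ≤ 2^(m+1) := Nat.one_lt_two_pow (by omega)
        have h2 : (2:ℕ)^(m+1+1) = 2^(m+1) + 2^(m+1) := by ring
        omega
    have hstep : ∑ j ∈ Finset.Icc 1 k, 2^j
        ≤ ∑ j ∈ Finset.Icc 1 J, 2^j * (if 2^j ≤ a then 1 else 0) := by
      have hsub : Finset.Icc 1 k ⊆ Finset.Icc 1 J := by
        intro j hj
        rw [Finset.mem_Icc] at hj ⊢
        omega
      calc ∑ j ∈ Finset.Icc 1 k, 2^j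
          = ∑ j ∈ Finset.Icc 1 k, 2^j * (if 2^j ≤ a then 1 else 0) := by
            refine Finset.sum_congr rfl (fun j hj => ?_)
            rw [Finset.mem_Icc] at hj
            have : (2:ℕ)^j ≤ 2^k := Nat.pow_le_pow_right (by norm_num) hj.2
            rw [if_pos (le_trans this hk2), mul_one]
      _ ≤ ∑ j ∈ Finset.Icc 1 J, 2^j * (if 2^j ≤ a then 1 else 0) :=
            Finset.sum_le_sum_of_subset hsub
    rw [hgeom] at hstep
    have h4 : 2 ≤ 2^(k+1) := Nat.one_lt_two_pow (by omega)
    omega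

theorem energy_incidence_real :
    ∃ C : ℝ, 0 < C ∧
      ∀ (A B : Finset ℝ) (L : Finset (ℝ × ℝ)), (∀ l ∈ L, l.1 ≠ 0) →
        (inc A B L : ℝ) ≤
          C * max ((B.card : ℝ) ^ ((1 : ℝ) / 2) * (L.card : ℝ))
            ((B.card : ℝ) ^ ((1 : ℝ) / 2) * (A.card : ℝ) ^ ((2 : ℝ) / 3) *
              (affEnergy L : ℝ) ^ ((1 : ℝ) / 6) * (L.card : ℝ) ^ ((1 : ℝ) / 3)) := by
  classical
  refine ⟨9, by norm_num, ?_⟩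
  intro A B L hL
  set na : ℝ := (A.card : ℝ) with hna
  set nb : ℝ := (B.card : ℝ) with hnb
  set nl : ℝ := (L.card : ℝ) with hnl
  set E : ℝ := (affEnergy L : ℝ) with hE
  have hna0 : 0 ≤ na := Nat.cast_nonneg _
  have hnb0 : 0 ≤ nb := Nat.cast_nonneg _
  have hnl0 : 0 ≤ nl := Nat.cast_nonneg _
  have hE0 : 0 ≤ E := Nat.cast_nonneg _
  set M1 : ℝ := nb ^ ((1:ℝ)/2) * nl with hM1
  set M2 : ℝ := nb ^ ((1:ℝ)/2) * na ^ ((2:ℝ)/3) * E ^ ((1:ℝ)/6) * nl ^ ((1:ℝ)/3)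
    with hM2
  have hM10 : 0 ≤ M1 := by rw [hM1]; positivity
  have hM20 : 0 ≤ M2 := by rw [hM2]; positivity
  set M : ℝ := max M1 M2 with hM
  have hM0 : 0 ≤ M := le_trans hM10 (le_max_left _ _)
  -- squares of M1, M2
  have hM1sq : M1^2 = nb * nl^2 := by
    rw [hM1, mul_pow, ← Real.rpow_natCast (nb ^ ((1:ℝ)/2)) 2,
      ← Real.rpow_mul hnb0]
    norm_num
  have hM2sq : M2^2 = nb * (na ^ ((4:ℝ)/3) * E ^ ((1:ℝ)/3) * nl ^ ((2:ℝ)/3)) := by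
    rw [hM2, mul_pow, mul_pow, mul_pow,
      ← Real.rpow_natCast (nb ^ ((1:ℝ)/2)) 2, ← Real.rpow_mul hnb0,
      ← Real.rpow_natCast (na ^ ((2:ℝ)/3)) 2, ← Real.rpow_mul hna0,
      ← Real.rpow_natCast (E ^ ((1:ℝ)/6)) 2, ← Real.rpow_mul hE0,
      ← Real.rpow_natCast (nl ^ ((1:ℝ)/3)) 2, ← Real.rpow_mul hnl0]
    norm_num
    ring
  -- the main quadratic bound
  have hkey : ((inc A B L : ℕ) : ℝ)^2 ≤ nb * nl^2 + 78 * (nb * (na ^ ((4:ℝ)/3) * E ^ ((1:ℝ)/3) * nl ^ ((2:ℝ)/3))) := by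
    set J : ℕ := A.card with hJ
    set r : ℝ := (Real.sqrt 2)⁻¹ with hr
    set β : ℝ := Real.sqrt (2048 * na^4 * E) with hβ
    have hβ0 : 0 ≤ β := Real.sqrt_nonneg _
    have hx0 : (0:ℝ) ≤ 2048 * na^4 * E := by positivity
    -- counts
    set Pc : ℕ → ℕ := fun j => ((L ×ˢ L).filter (fun p => 2^j ≤ richA A (gm p))).card
      with hPc
    -- Step 1/2 : Cauchy-Schwarz
    have hCS : ((inc A B L : ℕ) : ℝ)^2
        ≤ nb * ((∑ y ∈ B, (nB A L y)^2 : ℕ) : ℝ) := by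
      have h1 : ((inc A B L : ℕ) : ℝ) = ∑ y ∈ B, ((nB A L y : ℕ) : ℝ) := by
        rw [inc_eq_sum A B L hL]
        push_cast
        rfl
      rw [h1]
      have h2 := sq_sum_le_card_mul_sum_sq (s := B) (f := fun y => ((nB A L y : ℕ) : ℝ))
      push_cast
      push_cast at h2
      exact h2
    -- Step 3/4 : dyadic decomposition (ℕ)
    have hSsplit : (∑ p ∈ L ×ˢ L, richA A (gm p))
        ≤ L.card^2 + ∑ j ∈ Finset.Icc 1 J, 2^j * Pc j := by
      have h1 : ∀ p ∈ L ×ˢ L, richA A (gm p)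
          ≤ 1 + ∑ j ∈ Finset.Icc 1 J, 2^j * (if 2^j ≤ richA A (gm p) then 1 else 0) := by
        intro p _
        exact ptwise_dyadic (Finset.card_le_card (Finset.filter_subset _ _))
      calc (∑ p ∈ L ×ˢ L, richA A (gm p))
          ≤ ∑ p ∈ L ×ˢ L, (1 + ∑ j ∈ Finset.Icc 1 J,
              2^j * (if 2^j ≤ richA A (gm p) then 1 else 0)) :=
            Finset.sum_le_sum h1
      _ = (L ×ˢ L).card + ∑ p ∈ L ×ˢ L, ∑ j ∈ Finset.Icc 1 J,
              2^j * (if 2^j ≤ richA A (gm p) then 1 else 0) := by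
            rw [Finset.sum_add_distrib, Finset.sum_const, smul_eq_mul, mul_one]
      _ = L.card^2 + ∑ j ∈ Finset.Icc 1 J, ∑ p ∈ L ×ˢ L,
              2^j * (if 2^j ≤ richA A (gm p) then 1 else 0) := by
            rw [Finset.card_product, Finset.sum_comm, pow_two]
      _ = L.card^2 + ∑ j ∈ Finset.Icc 1 J, 2^j * Pc j := by
            congr 1
            refine Finset.sum_congr rfl (fun j _ => ?_)
            have hcf : Pc j = ∑ p ∈ L ×ˢ L, (if 2^j ≤ richA A (gm p) then 1 else 0) :=
              Finset.card_filter _ _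
            rw [hcf, Finset.mul_sum]
    -- Step 5 : per-level bound
    have hjb : ∀ j ∈ Finset.Icc 1 J,
        ((2^j * Pc j : ℕ) : ℝ) ≤ min (nl^2 * 2^j) (β * r^j) := by
      intro j hj
      rw [Finset.mem_Icc] at hj
      have ht0 : (0:ℝ) < 2^j := by positivity
      apply le_min
      · have h1 : Pc j ≤ L.card^2 := by
          rw [hPc]
          calc ((L ×ˢ L).filter (fun p => 2^j ≤ richA A (gm p))).card
              ≤ (L ×ˢ L).card := Finset.card_le_card (Finset.filter_subset _ _)
          _ = L.card^2 := by rw [Finset.card_product, pow_two]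
        push_cast
        rw [mul_comm ((2:ℝ)^j) _]
        apply mul_le_mul_of_nonneg_right _ (le_of_lt ht0)
        rw [hnl]
        exact_mod_cast h1
      · -- energy + rich bound
        set Pj := (L ×ˢ L).filter (fun p => 2^j ≤ richA A (gm p)) with hPj
        set Dj := Pj.image gm with hDj
        have hτ2 : 2 ≤ 2^j := by
          calc 2 = 2^1 := by norm_num
          _ ≤ 2^j := Nat.pow_le_pow_right (by norm_num) hj.1
        have hs : ∀ γ ∈ Dj, γ.1 ≠ 0 := by
          intro γ hγ
          obtain ⟨p, hp, rfl⟩ := Finset.mem_image.1 hγ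
          have hpLL := Finset.mem_product.1 (Finset.mem_filter.1 hp).1
          have h1 : p.1.1 ≠ 0 := hL p.1 hpLL.1
          have h2 : p.2.1 ≠ 0 := hL p.2 hpLL.2
          show (acomp (ainv p.2) p.1).1 ≠ 0
          simp only [acomp, ainv]
          exact mul_ne_zero (inv_ne_zero h2) h1
        have hrich : ∀ γ ∈ Dj, 2^j ≤ richA A γ := by
          intro γ hγ
          obtain ⟨p, hp, rfl⟩ := Finset.mem_image.1 hγ
          exact (Finset.mem_filter.1 hp).2
        have hD := rich_bound A Dj (2^j) hτ2 hs hrich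
        have hlvl := level_sq A L (2^j)
        have hEeq : ((∑ γ ∈ (L ×ˢ L).image gm, (rfib L γ)^2 : ℕ) : ℝ) = E := by
          rw [hE, energy_fiber]
        rw [hEeq] at hlvl
        -- now bound squares
        have hLHS0 : (0:ℝ) ≤ ((2^j * Pc j : ℕ) : ℝ) := Nat.cast_nonneg _
        have hRHS0 : (0:ℝ) ≤ β * r^j := by
          apply mul_nonneg hβ0
          apply pow_nonneg
          rw [hr]; positivity
        have hsq : ((2^j * Pc j : ℕ) : ℝ)^2 ≤ (β * r^j)^2 := by
          have e1 : ((2^j * Pc j : ℕ) : ℝ)^2 = ((2:ℝ)^j)^2 * ((Pc j : ℕ) : ℝ)^2 := by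
            push_cast
            ring
          have e2 : (β * r^j)^2 = (2048 * na^4 * E) * ((2:ℝ)^j)⁻¹ := by
            rw [mul_pow, ← pow_mul, mul_comm j 2, pow_mul, hr]
            rw [Real.sq_sqrt hx0]
            congr 1
            have : ((Real.sqrt 2)⁻¹)^2 = (2:ℝ)⁻¹ := by
              rw [inv_pow, Real.sq_sqrt (by norm_num : (0:ℝ) ≤ 2)]
            rw [this, ← inv_pow]
          rw [e1, e2]
          have hcast : (((2:ℕ)^j : ℕ):ℝ) = (2:ℝ)^j := by push_cast; rfl
          rw [hcast] at hD
          -- (2^j)² Pc² ≤ (2^j)² (Dj E) ≤ 2048 na⁴ E / 2^j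
          have h3 : ((Pc j : ℕ) : ℝ)^2 ≤ (Dj.card : ℝ) * E := hlvl
          have h4 : ((2:ℝ)^j)^2 * ((Pc j : ℕ) : ℝ)^2
              ≤ ((2:ℝ)^j)^2 * ((Dj.card : ℝ) * E) := by
            apply mul_le_mul_of_nonneg_left h3 (by positivity)
          have h5 : ((2:ℝ)^j)^2 * ((Dj.card : ℝ) * E) * (2:ℝ)^j
              ≤ (2048 * na^4 * E) := by
            have h6 : (Dj.card : ℝ) * ((2:ℝ)^j)^3 * E ≤ 2048 * na^4 * E := by
              apply mul_le_mul_of_nonneg_right hD hE0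
            calc ((2:ℝ)^j)^2 * ((Dj.card : ℝ) * E) * (2:ℝ)^j
                = (Dj.card : ℝ) * ((2:ℝ)^j)^3 * E := by ring
            _ ≤ 2048 * na^4 * E := h6
          calc ((2:ℝ)^j)^2 * ((Pc j : ℕ) : ℝ)^2
              ≤ ((2:ℝ)^j)^2 * ((Dj.card : ℝ) * E) := h4
          _ = ((2:ℝ)^j)^2 * ((Dj.card : ℝ) * E) * (2:ℝ)^j * ((2:ℝ)^j)⁻¹ := by
              field_simp
          _ ≤ (2048 * na^4 * E) * ((2:ℝ)^j)⁻¹ := by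
              apply mul_le_mul_of_nonneg_right h5 (by positivity)
        calc ((2^j * Pc j : ℕ) : ℝ) = Real.sqrt (((2^j * Pc j : ℕ) : ℝ)^2) :=
              (Real.sqrt_sq hLHS0).symm
        _ ≤ Real.sqrt ((β * r^j)^2) := Real.sqrt_le_sqrt hsq
        _ = β * r^j := Real.sqrt_sq hRHS0
    -- Step 6 : sum the levels
    have hsum : ((∑ j ∈ Finset.Icc 1 J, 2^j * Pc j : ℕ) : ℝ)
        ≤ 6 * (nl^2)^((1:ℝ)/3) * β^((2:ℝ)/3) := by
      calc ((∑ j ∈ Finset.Icc 1 J, 2^j * Pc j : ℕ) : ℝ)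
          = ∑ j ∈ Finset.Icc 1 J, ((2^j * Pc j : ℕ) : ℝ) := by push_cast; rfl
      _ ≤ ∑ j ∈ Finset.Icc 1 J, min (nl^2 * 2^j) (β * r^j) :=
          Finset.sum_le_sum hjb
      _ ≤ 6 * (nl^2)^((1:ℝ)/3) * β^((2:ℝ)/3) := by
          rw [hr]
          exact dyadic_sum (nl^2) β (by positivity) hβ0 J
    -- Step 7 : rpow identifications
    have hrp1 : (nl^2)^((1:ℝ)/3) = nl^((2:ℝ)/3) := by
      rw [← Real.rpow_natCast nl 2, ← Real.rpow_mul hnl0]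
      norm_num
    have hrp2 : β^((2:ℝ)/3) ≤ 13 * (na^((4:ℝ)/3) * E^((1:ℝ)/3)) := by
      have e1 : β^((2:ℝ)/3) = (2048 * na^4 * E)^((1:ℝ)/3) := by
        rw [hβ, Real.sqrt_eq_rpow, ← Real.rpow_mul hx0]
        norm_num
      have e2 : ((2048 : ℝ) * na^4 * E)^((1:ℝ)/3)
          = (2048:ℝ)^((1:ℝ)/3) * (na^4)^((1:ℝ)/3) * E^((1:ℝ)/3) := by
        rw [Real.mul_rpow (by positivity) hE0, Real.mul_rpow (by norm_num) (by positivity)]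
      have e3 : (na^4 : ℝ)^((1:ℝ)/3) = na^((4:ℝ)/3) := by
        rw [← Real.rpow_natCast na 4, ← Real.rpow_mul hna0]
        norm_num
      have e4 : (2048:ℝ)^((1:ℝ)/3) ≤ 13 := by
        calc (2048:ℝ)^((1:ℝ)/3) ≤ (2197:ℝ)^((1:ℝ)/3) :=
              Real.rpow_le_rpow (by norm_num) (by norm_num) (by norm_num)
        _ = ((13:ℝ)^(3:ℕ))^((1:ℝ)/3) := by norm_num
        _ = 13 := by
            rw [← Real.rpow_natCast (13:ℝ) 3, ← Real.rpow_mul (by norm_num)]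
            norm_num
      rw [e1, e2, e3]
      have h5 : (0:ℝ) ≤ na^((4:ℝ)/3) * E^((1:ℝ)/3) := by positivity
      calc (2048:ℝ)^((1:ℝ)/3) * na^((4:ℝ)/3) * E^((1:ℝ)/3)
          = (2048:ℝ)^((1:ℝ)/3) * (na^((4:ℝ)/3) * E^((1:ℝ)/3)) := by ring
      _ ≤ 13 * (na^((4:ℝ)/3) * E^((1:ℝ)/3)) := mul_le_mul_of_nonneg_right e4 h5
    -- assemble
    have hmid : ((∑ y ∈ B, (nB A L y)^2 : ℕ) : ℝ)
        ≤ nl^2 + 78 * (na^((4:ℝ)/3) * E^((1:ℝ)/3) * nl^((2:ℝ)/3)) := by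
      have h1 : (∑ y ∈ B, (nB A L y)^2 : ℕ) ≤ L.card^2 + ∑ j ∈ Finset.Icc 1 J, 2^j * Pc j :=
        le_trans (sum_nB_sq_le A B L hL) hSsplit
      have h2 : ((∑ y ∈ B, (nB A L y)^2 : ℕ) : ℝ)
          ≤ nl^2 + ((∑ j ∈ Finset.Icc 1 J, 2^j * Pc j : ℕ) : ℝ) := by
        have h2a := (Nat.cast_le (α := ℝ)).2 h1
        rw [Nat.cast_add] at h2a
        have h2b : ((L.card^2 : ℕ) : ℝ) = nl^2 := by rw [hnl]; push_cast; ring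
        rw [h2b] at h2a
        exact h2a
      have h3 : ((∑ j ∈ Finset.Icc 1 J, 2^j * Pc j : ℕ) : ℝ)
          ≤ 78 * (na^((4:ℝ)/3) * E^((1:ℝ)/3) * nl^((2:ℝ)/3)) := by
        calc ((∑ j ∈ Finset.Icc 1 J, 2^j * Pc j : ℕ) : ℝ)
            ≤ 6 * (nl^2)^((1:ℝ)/3) * β^((2:ℝ)/3) := hsum
        _ = 6 * nl^((2:ℝ)/3) * β^((2:ℝ)/3) := by rw [hrp1]
        _ ≤ 6 * nl^((2:ℝ)/3) * (13 * (na^((4:ℝ)/3) * E^((1:ℝ)/3))) := by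
            apply mul_le_mul_of_nonneg_left hrp2 (by positivity)
        _ = 78 * (na^((4:ℝ)/3) * E^((1:ℝ)/3) * nl^((2:ℝ)/3)) := by ring
      linarith
    calc ((inc A B L : ℕ) : ℝ)^2 ≤ nb * ((∑ y ∈ B, (nB A L y)^2 : ℕ) : ℝ) := hCS
    _ ≤ nb * (nl^2 + 78 * (na^((4:ℝ)/3) * E^((1:ℝ)/3) * nl^((2:ℝ)/3))) :=
        mul_le_mul_of_nonneg_left hmid hnb0
    _ = nb * nl^2 + 78 * (nb * (na ^ ((4:ℝ)/3) * E ^ ((1:ℝ)/3) * nl ^ ((2:ℝ)/3))) := by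
        ring
  have hIM : ((inc A B L : ℕ) : ℝ)^2 ≤ 79 * M^2 := by
    have h1 : nb * nl^2 ≤ M^2 := by
      rw [← hM1sq]
      apply pow_le_pow_left₀ hM10 (le_max_left _ _)
    have h2 : nb * (na ^ ((4:ℝ)/3) * E ^ ((1:ℝ)/3) * nl ^ ((2:ℝ)/3)) ≤ M^2 := by
      rw [← hM2sq]
      apply pow_le_pow_left₀ hM20 (le_max_right _ _)
    calc ((inc A B L : ℕ) : ℝ)^2
        ≤ nb * nl^2 + 78 * (nb * (na ^ ((4:ℝ)/3) * E ^ ((1:ℝ)/3) * nl ^ ((2:ℝ)/3))) := hkey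
    _ ≤ M^2 + 78 * M^2 := by linarith
    _ = 79 * M^2 := by ring
  have hI0 : (0:ℝ) ≤ ((inc A B L : ℕ) : ℝ) := Nat.cast_nonneg _
  have h9M : (0:ℝ) ≤ 9 * M := by linarith
  have : ((inc A B L : ℕ) : ℝ)^2 ≤ (9*M)^2 := by
    calc ((inc A B L : ℕ) : ℝ)^2 ≤ 79 * M^2 := hIM
    _ ≤ (9*M)^2 := by nlinarith [sq_nonneg M]
  calc ((inc A B L : ℕ) : ℝ) = Real.sqrt (((inc A B L : ℕ) : ℝ)^2) :=
        (Real.sqrt_sq hI0).symm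
  _ ≤ Real.sqrt ((9*M)^2) := Real.sqrt_le_sqrt this
  _ = 9 * M := Real.sqrt_sq h9M
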